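/- Let Z be a measurable space, n ≥ 1, p ≥ 1, ε, δ ∈ (0,1), α > 0, and let θ̂ : Z^n → ℝ^p be measurable, γ : Z^n → [0,∞) measurable, and π_⊥ a probability measure on ℝ^p. Let θ ∈ ℝ^p and C_⊥ > 0 be such that ‖w − θ‖² ≤ C_⊥ for π_⊥-almost every w. Let ν be any probability measure on Z^n, let X ~ ν, and let θ̃ denote the output of the ePTR mechanism on input X (with internal randomness independent of X). Then, with M = 1 + (2/ε)·log(max(1/δ, 1/ε)), E[‖θ̃ − θ‖²] ≤ E_ν[‖θ̂(X) − θ‖²] + (8 α² p / ε²)·log(1.25/δ) + C_⊥·( ν({X : γ(X) < 2M}) + δ ), where the expectation on the left is over both X ~ ν and the mechanism's internal randomness. -/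

import Mathlib

open MeasureTheory ProbabilityTheory Matrix
open scoped Classical NNReal ENNReal RealInnerProductSpace

noncomputable section

namespace EPTR

variable {Z : Type*}

/-- Hamming distance between two datasets of size `n`. -/
def hDist {n : ℕ} (X X' : Fin n → Z) : ℕ :=
  (Finset.univ.filter fun i => X i ≠ X' i).card

/-- Two datasets are neighbors if they differ in exactly one coordinate. -/
def Neighbor {n : ℕ} (X X' : Fin n → Z) : Prop := hDist X X' = 1

/-- Gaussian measure on Euclidean space with mean `m` and covariance `v • I`
(the product of one-dimensional Gaussians of variance `v`). -/
def gaussianE {ι : Type*} [Fintype ι] (m : EuclideanSpace ℝ ι) (v : ℝ≥0) :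
    Measure (EuclideanSpace ℝ ι) :=
  (Measure.pi fun i => gaussianReal (m i) v).map (MeasurableEquiv.toLp 2 (ι → ℝ))

/-- The threshold shift `M = 1 + (2/ε) log (max (1/δ) (1/ε))` of the ePTR mechanism. -/
def Mshift (ε δ : ℝ) : ℝ := 1 + 2 / ε * Real.log (max (1 / δ) (1 / ε))

/-- The release probability of the ePTR mechanism at sub-distance value `g`. -/
def relProb (ε δ g : ℝ) : ℝ :=
  Real.exp (ε * (g - Mshift ε δ) / 2) / (Real.exp (ε * (g - Mshift ε δ) / 2) + 1)

/-- The standard deviation `s = (2α/ε)√(2 log(1.25/δ))` of the ePTR Gaussian noise. -/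
def noiseSD (ε δ α : ℝ) : ℝ := 2 * α / ε * Real.sqrt (2 * Real.log (1.25 / δ))

/-- Output distribution of the ePTR mechanism on input dataset `X`
(Euclidean-space valued version). -/
def ePTR {n : ℕ} {ι : Type*} [Fintype ι] (ε δ α : ℝ)
    (θhat : (Fin n → Z) → EuclideanSpace ℝ ι) (γ : (Fin n → Z) → ℝ)
    (πbot : Measure (EuclideanSpace ℝ ι)) (X : Fin n → Z) :
    Measure (EuclideanSpace ℝ ι) :=
  ENNReal.ofReal (relProb ε δ (γ X)) • gaussianE (θhat X) (Real.toNNReal (noiseSD ε δ α ^ 2))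
    + ENNReal.ofReal (1 - relProb ε δ (γ X)) • πbot

/-- Output distribution of the ePTR mechanism on input dataset `X` (real valued version). -/
def ePTR1 {n : ℕ} (ε δ α : ℝ)
    (θhat : (Fin n → Z) → ℝ) (γ : (Fin n → Z) → ℝ)
    (πbot : Measure ℝ) (X : Fin n → Z) : Measure ℝ :=
  ENNReal.ofReal (relProb ε δ (γ X)) • gaussianReal (θhat X) (Real.toNNReal (noiseSD ε δ α ^ 2))
    + ENNReal.ofReal (1 - relProb ε δ (γ X)) • πbot

/-- `(ε, δ)`-differential privacy of a mechanism: for all neighboring datasets `X, X'`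
and all measurable events `B`, `μ_X(B) ≤ e^ε μ_{X'}(B) + δ`. -/
def IsDP {n : ℕ} {Ω : Type*} [MeasurableSpace Ω]
    (mech : (Fin n → Z) → Measure Ω) (ε δ : ℝ) : Prop :=
  ∀ X X' : Fin n → Z, Neighbor X X' → ∀ B : Set Ω, MeasurableSet B →
    mech X B ≤ ENNReal.ofReal (Real.exp ε) * mech X' B + ENNReal.ofReal δ

/-- Projection onto the closed ball of radius `a` in a normed space:
`proj a v = (a / max ‖v‖ a) • v`. -/
def proj {V : Type*} [NormedAddCommGroup V] [Module ℝ V] (a : ℝ) (v : V) : V :=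
  (a / max ‖v‖ a) • v

/-- Identification of `Fin p → ℝ` with Euclidean space. -/
def toE {p : ℕ} : (Fin p → ℝ) → EuclideanSpace ℝ (Fin p) :=
  ⇑(EuclideanSpace.equiv (Fin p) ℝ).symm

/-- ℓ²-operator norm of a square matrix. -/
def opNorm {p : ℕ} (A : Matrix (Fin p) (Fin p) ℝ) : ℝ :=
  ‖Matrix.toEuclideanCLM (𝕜 := ℝ) A‖

/-- Smallest eigenvalue of a (symmetric) matrix, via the Rayleigh quotient. -/
def lambdaMin {p : ℕ} (A : Matrix (Fin p) (Fin p) ℝ) : ℝ :=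
  ⨅ v : Metric.sphere (0 : EuclideanSpace ℝ (Fin p)) 1,
    ⟪Matrix.toEuclideanCLM (𝕜 := ℝ) A v.1, v.1⟫

/-- Index set of data points carrying label `k`. -/
def Ik {n K : ℕ} {E : Type*} (X : Fin n → E × Fin K) (k : Fin K) : Finset (Fin n) :=
  Finset.univ.filter fun j => (X j).2 = k

/-- Class-`k` sample frequency `μ̂_k = |I_k| / n`. -/
def classFreq {n K : ℕ} {E : Type*} (X : Fin n → E × Fin K) (k : Fin K) : ℝ :=
  (Ik X k).card / n

/-- Class-`k` sample mean (equal to `0` if the class is empty). -/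
def classMean {n K p : ℕ} (X : Fin n → EuclideanSpace ℝ (Fin p) × Fin K) (k : Fin K) :
    EuclideanSpace ℝ (Fin p) :=
  ((Ik X k).card : ℝ)⁻¹ • ∑ j ∈ Ik X k, (X j).1

/-- The sub-distance of the ePTR Bayes classifier:
`γ(X) = max(min_k |I_k(X)| - c₀ n - 1, 0)`. -/
def gammaBC {n K : ℕ} {E : Type*} (c0 : ℝ) (X : Fin n → E × Fin K) : ℝ :=
  max (((⨅ k : Fin K, (Ik X k).card : ℕ) : ℝ) - c0 * n - 1) 0

end EPTR

namespace EPTRAux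
open Real EPTR

lemma int_sq_exp {b : ℝ} (hb : 0 < b) :
    ∫ x : ℝ, x ^ 2 * Real.exp (-b * x ^ 2) = b ^ (-(3:ℝ)/2) * Real.sqrt π / 2 := by
  have h1 : ∫ x : ℝ, x ^ 2 * Real.exp (-b * x ^ 2)
      = 2 * ∫ x in Set.Ioi (0:ℝ), x ^ 2 * Real.exp (-b * x ^ 2) := by
    rw [← integral_comp_abs (f := fun t => t ^ 2 * Real.exp (-b * t ^ 2))]
    congr 1 with x
    simp [sq_abs]
  have h2 : ∫ x in Set.Ioi (0:ℝ), x ^ 2 * Real.exp (-b * x ^ 2)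
      = b ^ (-((2:ℝ) + 1) / 2) * (1 / 2) * Real.Gamma (((2:ℝ) + 1) / 2) := by
    rw [← integral_rpow_mul_exp_neg_mul_rpow two_pos (by norm_num : (-1:ℝ) < 2) hb]
    refine setIntegral_congr_fun measurableSet_Ioi (fun x _ => ?_)
    norm_cast
  have hG : Real.Gamma (((2:ℝ) + 1) / 2) = Real.sqrt π / 2 := by
    have : ((2:ℝ) + 1) / 2 = 1/2 + 1 := by norm_num
    rw [this, Real.Gamma_add_one (by norm_num), Real.Gamma_one_half_eq]
    ring
  rw [h1, h2, hG]
  ring_nf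

lemma pdf0_eq {v : ℝ≥0} :
    gaussianPDFReal 0 v = fun x => (Real.sqrt (2 * π * v))⁻¹ * Real.exp (-(2 * (v:ℝ))⁻¹ * x ^ 2) := by
  ext x
  by_cases hv : v = 0
  · simp [hv, gaussianPDFReal]
  · have hv' : (v:ℝ) ≠ 0 := by exact_mod_cast hv
    simp only [gaussianPDFReal, sub_zero]
    congr 1
    field_simp

lemma integrable_sq_pdf0 {v : ℝ≥0} (hv : v ≠ 0) :
    Integrable (fun x : ℝ => x ^ 2 * gaussianPDFReal 0 v x) := by
  have hb : 0 < (2 * (v:ℝ))⁻¹ := by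
    have : 0 < (v:ℝ) := lt_of_le_of_ne (v.coe_nonneg) (by exact_mod_cast (Ne.symm hv))
    positivity
  have h := integrable_rpow_mul_exp_neg_mul_sq hb (by norm_num : (-1:ℝ) < 2)
  have h2 : Integrable (fun x : ℝ => x ^ 2 * Real.exp (-(2 * (v:ℝ))⁻¹ * x ^ 2)) := by
    refine h.congr ?_
    filter_upwards with x
    norm_num
  rw [pdf0_eq]
  have := h2.const_mul (Real.sqrt (2 * π * v))⁻¹
  refine this.congr ?_
  filter_upwards with x
  ring

lemma integrable_id_pdf0 {v : ℝ≥0} (hv : v ≠ 0) :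
    Integrable (fun x : ℝ => x * gaussianPDFReal 0 v x) := by
  have hb : 0 < (2 * (v:ℝ))⁻¹ := by
    have : 0 < (v:ℝ) := lt_of_le_of_ne (v.coe_nonneg) (by exact_mod_cast (Ne.symm hv))
    positivity
  have h2 := (integrable_mul_exp_neg_mul_sq hb).const_mul (Real.sqrt (2 * π * v))⁻¹
  rw [pdf0_eq]
  refine h2.congr ?_
  filter_upwards with x
  ring

lemma integral_id_pdf0 {v : ℝ≥0} : ∫ x : ℝ, x * gaussianPDFReal 0 v x = 0 := by
  have h := integral_neg_eq_self (fun x : ℝ => x * gaussianPDFReal 0 v x) volume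
  have h2 : ∫ x : ℝ, (-x) * gaussianPDFReal 0 v (-x) = ∫ x : ℝ, -(x * gaussianPDFReal 0 v x) := by
    congr 1 with x
    rw [pdf0_eq]
    ring_nf
  rw [h2, integral_neg] at h
  linarith

lemma integral_sq_pdf0 {v : ℝ≥0} (hv : v ≠ 0) :
    ∫ x : ℝ, x ^ 2 * gaussianPDFReal 0 v x = v := by
  have hvpos : 0 < (v:ℝ) := lt_of_le_of_ne (v.coe_nonneg) (by exact_mod_cast (Ne.symm hv))
  have hb : 0 < (2 * (v:ℝ))⁻¹ := by positivity
  rw [pdf0_eq]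
  have : ∫ x : ℝ, x ^ 2 * ((Real.sqrt (2 * π * v))⁻¹ * Real.exp (-(2 * (v:ℝ))⁻¹ * x ^ 2))
      = (Real.sqrt (2 * π * v))⁻¹ * ∫ x : ℝ, x ^ 2 * Real.exp (-(2 * (v:ℝ))⁻¹ * x ^ 2) := by
    rw [← integral_const_mul]
    congr 1 with x; ring
  rw [this, int_sq_exp hb]
  -- now pure computation
  have h1 : ((2 * (v:ℝ))⁻¹) ^ (-(3:ℝ)/2) = (2 * (v:ℝ)) ^ ((3:ℝ)/2) := by
    rw [Real.inv_rpow (by positivity : (0:ℝ) ≤ 2 * (v:ℝ)),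
      show (-3:ℝ)/2 = -(3/2) by norm_num, Real.rpow_neg (by positivity), inv_inv]
  have h2 : (2 * (v:ℝ)) ^ ((3:ℝ)/2) = (2 * (v:ℝ)) * Real.sqrt (2 * (v:ℝ)) := by
    rw [show (3:ℝ)/2 = 1 + 1/2 by norm_num, Real.rpow_add (by positivity), Real.rpow_one,
      ← Real.sqrt_eq_rpow]
  have h3 : Real.sqrt (2 * π * (v:ℝ)) = Real.sqrt (2 * (v:ℝ)) * Real.sqrt π := by
    rw [← Real.sqrt_mul (by positivity)]
    ring_nf
  have hs : 0 < Real.sqrt (2 * (v:ℝ)) := Real.sqrt_pos.mpr (by positivity)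
  have hπ : 0 < Real.sqrt π := Real.sqrt_pos.mpr Real.pi_pos
  rw [h1, h2, h3]
  field_simp

lemma pdf_shift {v : ℝ≥0} (m x : ℝ) :
    gaussianPDFReal m v x = gaussianPDFReal 0 v (x - m) := by
  simp [gaussianPDFReal]

lemma integrable_shifted_sq_pdf0 {v : ℝ≥0} (hv : v ≠ 0) (d : ℝ) :
    Integrable (fun y : ℝ => (y + d) ^ 2 * gaussianPDFReal 0 v y) := by
  have h : (fun y : ℝ => (y + d) ^ 2 * gaussianPDFReal 0 v y)
      = fun y => y ^ 2 * gaussianPDFReal 0 v y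
        + ((2 * d) * (y * gaussianPDFReal 0 v y) + d ^ 2 * gaussianPDFReal 0 v y) := by
    ext y; ring
  rw [h]
  exact (integrable_sq_pdf0 hv).add (((integrable_id_pdf0 hv).const_mul _).add
    ((integrable_gaussianPDFReal 0 v).const_mul _))

lemma integral_shifted_sq_pdf0 {v : ℝ≥0} (hv : v ≠ 0) (d : ℝ) :
    ∫ y : ℝ, (y + d) ^ 2 * gaussianPDFReal 0 v y = d ^ 2 + v := by
  have h : (fun y : ℝ => (y + d) ^ 2 * gaussianPDFReal 0 v y)
      = fun y => y ^ 2 * gaussianPDFReal 0 v y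
        + ((2 * d) * (y * gaussianPDFReal 0 v y) + d ^ 2 * gaussianPDFReal 0 v y) := by
    ext y; ring
  have hA : Integrable (fun y : ℝ => y ^ 2 * gaussianPDFReal 0 v y) := integrable_sq_pdf0 hv
  have hB : Integrable (fun y : ℝ => 2 * d * (y * gaussianPDFReal 0 v y)) :=
    (integrable_id_pdf0 hv).const_mul _
  have hC : Integrable (fun y : ℝ => d ^ 2 * gaussianPDFReal 0 v y) :=
    (integrable_gaussianPDFReal 0 v).const_mul _
  have hBC : Integrable (fun y : ℝ =>
      2 * d * (y * gaussianPDFReal 0 v y) + d ^ 2 * gaussianPDFReal 0 v y) := hB.add hC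
  rw [h, integral_add hA hBC, integral_add hB hC,
    integral_const_mul, integral_const_mul, integral_sq_pdf0 hv, integral_id_pdf0,
    integral_gaussianPDFReal_eq_one 0 hv]
  ring

lemma integrable_sq_pdf' {v : ℝ≥0} (hv : v ≠ 0) (m c : ℝ) :
    Integrable (fun x : ℝ => (x - c) ^ 2 * gaussianPDFReal m v x) := by
  have h := (integrable_shifted_sq_pdf0 hv (m - c)).comp_sub_right (g := m)
  refine h.congr ?_
  filter_upwards with x
  rw [pdf_shift m x]
  ring

lemma integral_sq_pdf' {v : ℝ≥0} (hv : v ≠ 0) (m c : ℝ) :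
    ∫ x : ℝ, (x - c) ^ 2 * gaussianPDFReal m v x = (m - c) ^ 2 + v := by
  have h : ∫ x : ℝ, (x - c) ^ 2 * gaussianPDFReal m v x
      = ∫ x : ℝ, (fun y => (y + (m - c)) ^ 2 * gaussianPDFReal 0 v y) (x - m) := by
    congr 1 with x
    rw [pdf_shift m x]
    ring
  rw [h, integral_sub_right_eq_self (fun y => (y + (m - c)) ^ 2 * gaussianPDFReal 0 v y) m,
    integral_shifted_sq_pdf0 hv]

lemma lintegral_sq_gaussianReal (m c : ℝ) (v : ℝ≥0) :
    ∫⁻ x, ENNReal.ofReal ((x - c) ^ 2) ∂gaussianReal m v = ENNReal.ofReal ((m - c) ^ 2 + v) := by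
  by_cases hv : v = 0
  · rw [hv, gaussianReal_zero_var]
    rw [lintegral_dirac' _ (by fun_prop)]
    simp
  · rw [gaussianReal_of_var_ne_zero _ hv,
      lintegral_withDensity_eq_lintegral_mul _ (measurable_gaussianPDF _ _) (by fun_prop)]
    have : ∀ x : ℝ, (gaussianPDF m v * fun x => ENNReal.ofReal ((x - c) ^ 2)) x
        = ENNReal.ofReal ((x - c) ^ 2 * gaussianPDFReal m v x) := by
      intro x
      simp only [Pi.mul_apply, gaussianPDF]
      rw [← ENNReal.ofReal_mul (gaussianPDFReal_nonneg m v x), mul_comm]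
    simp_rw [this]
    rw [← ofReal_integral_eq_lintegral_ofReal (integrable_sq_pdf' hv m c)
      (Filter.Eventually.of_forall fun x => mul_nonneg (sq_nonneg _) (gaussianPDFReal_nonneg m v x)),
      integral_sq_pdf' hv m c]

lemma pi_map_eval {ι : Type*} [Fintype ι] (μ : ι → Measure ℝ) [∀ i, IsProbabilityMeasure (μ i)]
    (i : ι) : (Measure.pi μ).map (Function.eval i) = μ i := by
  ext s hs
  rw [Measure.map_apply (measurable_pi_apply i) hs, Set.eval_preimage, Measure.pi_pi]
  rw [Finset.prod_eq_single i (fun j _ hj => by simp [Function.update_of_ne hj])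
    (fun h => absurd (Finset.mem_univ i) h)]
  simp

lemma lintegral_sq_gaussianE {p : ℕ} (m θ : EuclideanSpace ℝ (Fin p)) (v : ℝ≥0) :
    ∫⁻ w, ENNReal.ofReal (‖w - θ‖ ^ 2) ∂(EPTR.gaussianE m v)
      = ENNReal.ofReal (‖m - θ‖ ^ 2) + p * ENNReal.ofReal v := by
  have hnorm : ∀ w : EuclideanSpace ℝ (Fin p), ‖w - θ‖ ^ 2 = ∑ i, (w i - θ i) ^ 2 := by
    intro w
    rw [EuclideanSpace.norm_eq, Real.sq_sqrt (by positivity)]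
    congr 1 with i
    rw [Real.norm_eq_abs, sq_abs, PiLp.sub_apply]
  rw [EPTR.gaussianE, lintegral_map_equiv]
  have he : ∀ (x : Fin p → ℝ) (i : Fin p),
      ((MeasurableEquiv.toLp 2 (Fin p → ℝ)) x) i = x i := fun _ _ => rfl
  calc ∫⁻ x, ENNReal.ofReal (‖(MeasurableEquiv.toLp 2 (Fin p → ℝ)) x - θ‖ ^ 2)
        ∂(Measure.pi fun i => gaussianReal (m i) v)
      = ∫⁻ x, ∑ i, ENNReal.ofReal ((x i - θ i) ^ 2)
        ∂(Measure.pi fun i => gaussianReal (m i) v) := by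
        congr 1 with x
        rw [hnorm, ENNReal.ofReal_sum_of_nonneg (fun i _ => sq_nonneg _)]
        simp_rw [he]
    _ = ∑ i, ∫⁻ x, ENNReal.ofReal ((x i - θ i) ^ 2)
        ∂(Measure.pi fun i => gaussianReal (m i) v) := by
        rw [lintegral_finset_sum]
        intro i _
        fun_prop
    _ = ∑ i, ∫⁻ t, ENNReal.ofReal ((t - θ i) ^ 2) ∂gaussianReal (m i) v := by
        congr 1 with i
        rw [← pi_map_eval (fun i => gaussianReal (m i) v) i,
          lintegral_map (by fun_prop) (measurable_pi_apply i)]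
    _ = ∑ i : Fin p, (ENNReal.ofReal ((m i - θ i) ^ 2) + ENNReal.ofReal v) := by
        congr 1 with i
        rw [lintegral_sq_gaussianReal, ENNReal.ofReal_add (sq_nonneg _) v.coe_nonneg]
    _ = ENNReal.ofReal (‖m - θ‖ ^ 2) + p * ENNReal.ofReal v := by
        rw [Finset.sum_add_distrib, hnorm,
          ENNReal.ofReal_sum_of_nonneg (fun i _ => sq_nonneg _)]
        simp [mul_comm]


open EPTR

lemma relProb_nonneg (ε δ g : ℝ) : 0 ≤ relProb ε δ g := by
  unfold relProb; positivity

lemma relProb_le_one (ε δ g : ℝ) : relProb ε δ g ≤ 1 := by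
  unfold relProb
  rw [div_le_one (by positivity)]
  linarith [Real.exp_pos (ε * (g - Mshift ε δ) / 2)]

lemma one_sub_relProb_le {ε δ : ℝ} (hε : ε ∈ Set.Ioo (0:ℝ) 1) (hδ : δ ∈ Set.Ioo (0:ℝ) 1)
    {g : ℝ} (hg : 2 * Mshift ε δ ≤ g) : 1 - relProb ε δ g ≤ δ := by
  obtain ⟨hε0, hε1⟩ := hε
  obtain ⟨hδ0, hδ1⟩ := hδ
  set M := Mshift ε δ with hM
  set e := Real.exp (ε * (g - M) / 2) with he
  have hepos : 0 < e := Real.exp_pos _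
  have hL : 0 < Real.log (max (1 / δ) (1 / ε)) := by
    apply Real.log_pos
    calc (1:ℝ) < 1 / δ := by rw [lt_div_iff₀ hδ0]; linarith
    _ ≤ max (1 / δ) (1 / ε) := le_max_left _ _
  have hMpos : 0 < M := by
    rw [hM, Mshift]
    have : 0 < 2 / ε := by positivity
    nlinarith
  have h1 : 1 - relProb ε δ g = 1 / (e + 1) := by
    rw [relProb, ← he]
    field_simp
    ring
  rw [h1]
  have h2 : 1 / (e + 1) ≤ 1 / e := by
    apply one_div_le_one_div_of_le hepos
    linarith
  have h3 : 1 / e = Real.exp (-(ε * (g - M) / 2)) := by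
    rw [Real.exp_neg, one_div]
  have h4 : Real.exp (-(ε * (g - M) / 2)) ≤ Real.exp (-(ε * M / 2)) := by
    apply Real.exp_le_exp.mpr
    have : M ≤ g - M := by linarith
    nlinarith
  have h5 : Real.exp (-(ε * M / 2)) ≤ δ := by
    have hεM : ε * M / 2 = ε / 2 + Real.log (max (1 / δ) (1 / ε)) := by
      rw [hM, Mshift]
      field_simp
    rw [hεM, neg_add, Real.exp_add]
    have hmaxpos : (0:ℝ) < max (1 / δ) (1 / ε) := lt_of_lt_of_le (by positivity) (le_max_left _ _)
    have hexplog : Real.exp (-Real.log (max (1 / δ) (1 / ε))) = (max (1 / δ) (1 / ε))⁻¹ := by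
      rw [Real.exp_neg, Real.exp_log hmaxpos]
    rw [hexplog]
    have hmax : (max (1 / δ) (1 / ε))⁻¹ ≤ δ := by
      rw [inv_le_comm₀ hmaxpos hδ0]
      exact le_trans (le_of_eq (one_div δ).symm) (le_max_left _ _)
    calc Real.exp (-(ε / 2)) * (max (1 / δ) (1 / ε))⁻¹
        ≤ 1 * (max (1 / δ) (1 / ε))⁻¹ := by
          apply mul_le_mul_of_nonneg_right _ (by positivity)
          exact Real.exp_le_one_iff.mpr (by linarith)
      _ = (max (1 / δ) (1 / ε))⁻¹ := one_mul _
      _ ≤ δ := hmax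
  linarith


end EPTRAux

/-- Theorem 2.2 (ePTR performance): the mean squared error of the ePTR output decomposes into
the privacy-less error of `θhat`, the local DP loss `(8α²p/ε²)·log(1.25/δ)`, and the PTR
failure loss `C_⊥ (ν(γ < 2M) + δ)`. The expectation on the left is over both the data `X ~ ν`
and the internal randomness of the mechanism. -/
theorem ePTR_performance {Z : Type*} [MeasurableSpace Z] {n p : ℕ} (hn : 1 ≤ n) (hp : 1 ≤ p)
    {ε δ α : ℝ} (hε : ε ∈ Set.Ioo (0 : ℝ) 1) (hδ : δ ∈ Set.Ioo (0 : ℝ) 1) (hα : 0 < α)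
    (θhat : (Fin n → Z) → EuclideanSpace ℝ (Fin p)) (hθmeas : Measurable θhat)
    (γ : (Fin n → Z) → ℝ) (hγmeas : Measurable γ)
    (πbot : Measure (EuclideanSpace ℝ (Fin p))) [IsProbabilityMeasure πbot]
    (θ : EuclideanSpace ℝ (Fin p)) {Cbot : ℝ} (hCbot : 0 < Cbot)
    (hπbot : ∀ᵐ w ∂πbot, ‖w - θ‖ ^ 2 ≤ Cbot)
    (ν : Measure (Fin n → Z)) [IsProbabilityMeasure ν] :
    ∫⁻ X, (∫⁻ w, ENNReal.ofReal (‖w - θ‖ ^ 2) ∂(EPTR.ePTR ε δ α θhat γ πbot X)) ∂ν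
      ≤ (∫⁻ X, ENNReal.ofReal (‖θhat X - θ‖ ^ 2) ∂ν)
          + ENNReal.ofReal (8 * α ^ 2 * p / ε ^ 2 * Real.log (1.25 / δ))
          + ENNReal.ofReal Cbot *
              (ν {X | γ X < 2 * EPTR.Mshift ε δ} + ENNReal.ofReal δ) := by
  obtain ⟨hε0, hε1⟩ := hε
  obtain ⟨hδ0, hδ1⟩ := hδ
  have hlog : 0 ≤ Real.log (1.25 / δ) := Real.log_nonneg (by rw [le_div_iff₀ hδ0]; linarith)
  have hvcoe : ((Real.toNNReal (EPTR.noiseSD ε δ α ^ 2)) : ℝ) = EPTR.noiseSD ε δ α ^ 2 :=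
    Real.coe_toNNReal _ (sq_nonneg _)
  have hmid : (p : ℝ≥0∞) * ENNReal.ofReal ((Real.toNNReal (EPTR.noiseSD ε δ α ^ 2)) : ℝ)
      = ENNReal.ofReal (8 * α ^ 2 * p / ε ^ 2 * Real.log (1.25 / δ)) := by
    rw [hvcoe, EPTR.noiseSD, mul_pow, Real.sq_sqrt (by positivity)]
    have h8 : 8 * α ^ 2 * (p:ℝ) / ε ^ 2 * Real.log (1.25 / δ)
        = (p:ℝ) * ((2 * α / ε) ^ 2 * (2 * Real.log (1.25 / δ))) := by
      field_simp
      ring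
    rw [h8, ENNReal.ofReal_mul (show (0:ℝ) ≤ (p:ℕ) by positivity), ENNReal.ofReal_natCast]
  have hA : Measurable fun X => ENNReal.ofReal (‖θhat X - θ‖ ^ 2) :=
    ENNReal.measurable_ofReal.comp (((hθmeas.sub measurable_const).norm).pow_const 2)
  have hrcont : Continuous fun g => EPTR.relProb ε δ g := by
    unfold EPTR.relProb
    apply Continuous.div (by continuity) (by continuity)
    intro g
    positivity
  have hC : Measurable fun X => ENNReal.ofReal (1 - EPTR.relProb ε δ (γ X)) :=
    ENNReal.measurable_ofReal.comp ((continuous_const.sub hrcont).measurable.comp hγmeas)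
  have hIπ : ∫⁻ w, ENNReal.ofReal (‖w - θ‖ ^ 2) ∂πbot ≤ ENNReal.ofReal Cbot := by
    calc ∫⁻ w, ENNReal.ofReal (‖w - θ‖ ^ 2) ∂πbot
        ≤ ∫⁻ _, ENNReal.ofReal Cbot ∂πbot :=
          lintegral_mono_ae (hπbot.mono fun w hw => ENNReal.ofReal_le_ofReal hw)
      _ = ENNReal.ofReal Cbot := by rw [lintegral_const, measure_univ, mul_one]
  have hinner : ∀ X, (∫⁻ w, ENNReal.ofReal (‖w - θ‖ ^ 2) ∂(EPTR.ePTR ε δ α θhat γ πbot X))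
      ≤ ENNReal.ofReal (‖θhat X - θ‖ ^ 2)
        + (p : ℝ≥0∞) * ENNReal.ofReal ((Real.toNNReal (EPTR.noiseSD ε δ α ^ 2)) : ℝ)
        + ENNReal.ofReal (1 - EPTR.relProb ε δ (γ X)) * ENNReal.ofReal Cbot := by
    intro X
    simp only [EPTR.ePTR]
    rw [lintegral_add_measure, lintegral_smul_measure, lintegral_smul_measure,
      EPTRAux.lintegral_sq_gaussianE]
    refine add_le_add ?_ (mul_le_mul_right hIπ _)
    calc ENNReal.ofReal (EPTR.relProb ε δ (γ X))
          * (ENNReal.ofReal (‖θhat X - θ‖ ^ 2)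
            + (p : ℝ≥0∞) * ENNReal.ofReal ((Real.toNNReal (EPTR.noiseSD ε δ α ^ 2)) : ℝ))
        ≤ 1 * (ENNReal.ofReal (‖θhat X - θ‖ ^ 2)
            + (p : ℝ≥0∞) * ENNReal.ofReal ((Real.toNNReal (EPTR.noiseSD ε δ α ^ 2)) : ℝ)) :=
          mul_le_mul_left
            (ENNReal.ofReal_le_one.mpr (EPTRAux.relProb_le_one ε δ (γ X))) _
      _ = _ := one_mul _
  have hS : MeasurableSet {X | γ X < 2 * EPTR.Mshift ε δ} :=
    measurableSet_lt hγmeas measurable_const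
  have key : ∫⁻ X, ENNReal.ofReal (1 - EPTR.relProb ε δ (γ X)) ∂ν
      ≤ ν {X | γ X < 2 * EPTR.Mshift ε δ} + ENNReal.ofReal δ := by
    calc ∫⁻ X, ENNReal.ofReal (1 - EPTR.relProb ε δ (γ X)) ∂ν
        ≤ ∫⁻ X, ({X | γ X < 2 * EPTR.Mshift ε δ}.indicator (1 : (Fin n → Z) → ℝ≥0∞) X
            + ENNReal.ofReal δ) ∂ν := by
          apply lintegral_mono
          intro X
          dsimp only
          by_cases hX : γ X < 2 * EPTR.Mshift ε δ
          · rw [Set.indicator_of_mem (show X ∈ {X | γ X < 2 * EPTR.Mshift ε δ} from hX)]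
            exact le_trans (ENNReal.ofReal_le_one.mpr
              (by linarith [EPTRAux.relProb_nonneg ε δ (γ X)])) le_self_add
          · rw [Set.indicator_of_notMem
              (show X ∉ {X | γ X < 2 * EPTR.Mshift ε δ} from hX), zero_add]
            exact ENNReal.ofReal_le_ofReal
              (EPTRAux.one_sub_relProb_le ⟨hε0, hε1⟩ ⟨hδ0, hδ1⟩ (not_lt.mp hX))
      _ = ν {X | γ X < 2 * EPTR.Mshift ε δ} + ENNReal.ofReal δ := by
          rw [lintegral_add_right _ measurable_const, lintegral_indicator_one hS,
            lintegral_const, measure_univ, mul_one]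
  calc ∫⁻ X, (∫⁻ w, ENNReal.ofReal (‖w - θ‖ ^ 2) ∂(EPTR.ePTR ε δ α θhat γ πbot X)) ∂ν
      ≤ ∫⁻ X, (ENNReal.ofReal (‖θhat X - θ‖ ^ 2)
          + (p : ℝ≥0∞) * ENNReal.ofReal ((Real.toNNReal (EPTR.noiseSD ε δ α ^ 2)) : ℝ)
          + ENNReal.ofReal (1 - EPTR.relProb ε δ (γ X)) * ENNReal.ofReal Cbot) ∂ν :=
        lintegral_mono hinner
    _ = (∫⁻ X, (ENNReal.ofReal (‖θhat X - θ‖ ^ 2)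
          + (p : ℝ≥0∞) * ENNReal.ofReal ((Real.toNNReal (EPTR.noiseSD ε δ α ^ 2)) : ℝ)) ∂ν)
          + ∫⁻ X, ENNReal.ofReal (1 - EPTR.relProb ε δ (γ X)) * ENNReal.ofReal Cbot ∂ν :=
        lintegral_add_left (hA.add measurable_const) _
    _ = (∫⁻ X, ENNReal.ofReal (‖θhat X - θ‖ ^ 2) ∂ν)
          + (p : ℝ≥0∞) * ENNReal.ofReal ((Real.toNNReal (EPTR.noiseSD ε δ α ^ 2)) : ℝ)
          + ENNReal.ofReal Cbot * ∫⁻ X, ENNReal.ofReal (1 - EPTR.relProb ε δ (γ X)) ∂ν := by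
        rw [lintegral_add_left hA, lintegral_const, measure_univ, mul_one]
        congr 1
        rw [← lintegral_const_mul _ hC]
        congr 1 with X
        rw [mul_comm]
    _ ≤ (∫⁻ X, ENNReal.ofReal (‖θhat X - θ‖ ^ 2) ∂ν)
          + (p : ℝ≥0∞) * ENNReal.ofReal ((Real.toNNReal (EPTR.noiseSD ε δ α ^ 2)) : ℝ)
          + ENNReal.ofReal Cbot * (ν {X | γ X < 2 * EPTR.Mshift ε δ} + ENNReal.ofReal δ) := by
        exact add_le_add_right (mul_le_mul_right key _) _
    _ = _ := by rw [hmid]
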